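/- The collision frequency ν satisfies the two-sided cubic growth bound ν₀(1+|p|)³ ≤ ν(p) ≤ ν₁(1+|p|)³ for all p with |p|² > 2Λ², for some positive constants ν₀, ν₁. -/

import Mathlib

open MeasureTheory

noncomputable section

/-- Momentum space ℝ³. -/
abbrev P3 := EuclideanSpace ℝ (Fin 3)

/-- The Planckian P(p) = 1/(e^{|p|²} − 1). -/
def Pl (p : P3) : ℝ := 1 / (Real.exp (‖p‖ ^ 2) - 1)

/-- Admissible set of p₂ in the first integral of ν(p) (p playing the role of p₁):
the Dirac constraints determine |p₃|² = |p|² − gn₀ − |p₂|², the radial delta contributes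
the factor π on the nonnegativity set, and χ̃ restricts all momenta to |q|² > 2Λ². -/
def domA (g n0 Λ : ℝ) (p : P3) : Set P3 :=
  {q | 2 * Λ ^ 2 < ‖q‖ ^ 2 ∧ 2 * Λ ^ 2 < ‖p‖ ^ 2 - g * n0 - ‖q‖ ^ 2 ∧
    0 ≤ ‖p‖ ^ 2 - g * n0 - ‖q‖ ^ 2 - (p 0 - q 0) ^ 2}

/-- Admissible set of p₃ in the second integral of ν(p) (p playing the role of p₂):
here |p₁|² = |p|² + |p₃|² + gn₀. -/
def domB (g n0 Λ : ℝ) (p : P3) : Set P3 :=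
  {q | 2 * Λ ^ 2 < ‖q‖ ^ 2 ∧ 0 ≤ ‖p‖ ^ 2 + ‖q‖ ^ 2 + g * n0 - (p 0 + q 0) ^ 2}

/-- The collision frequency ν(p) = ∫χ̃δ₀(1+P₂+P₃)dp₂dp₃ + 2∫χ̃δ₀(P₃−P₁)dp₁dp₃,
with the Dirac measures δ₀ resolved explicitly. -/
def nuFreq (g n0 Λ : ℝ) (p : P3) : ℝ :=
  Real.pi * (∫ q in domA g n0 Λ p,
      (1 + Pl q + 1 / (Real.exp (‖p‖ ^ 2 - g * n0 - ‖q‖ ^ 2) - 1)))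
  + 2 * Real.pi * (∫ q in domB g n0 Λ p,
      (Pl q - 1 / (Real.exp (‖p‖ ^ 2 + ‖q‖ ^ 2 + g * n0) - 1)))

/- ### Auxiliary lemmas -/

lemma abs_coord_le (p : P3) (i : Fin 3) : |p i| ≤ ‖p‖ := by
  rw [EuclideanSpace.norm_eq, ← Real.sqrt_sq_eq_abs]
  apply Real.sqrt_le_sqrt
  have h : ‖p i‖^2 ≤ ∑ j, ‖p j‖^2 :=
    Finset.single_le_sum (f := fun j => ‖p j‖^2) (fun j _ => by positivity) (Finset.mem_univ i)
  simpa [Real.norm_eq_abs, sq_abs] using h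

lemma norm_sq_eq3 (q : P3) : ‖q‖^2 = q 0^2 + q 1^2 + q 2^2 := by
  rw [EuclideanSpace.norm_eq, Real.sq_sqrt (by positivity)]
  simp [Fin.sum_univ_three, Real.norm_eq_abs, sq_abs]

lemma coord_sq_le (q : P3) (i : Fin 3) : q i ^ 2 ≤ ‖q‖^2 := by
  have h := abs_coord_le q i
  have h2 : |q i|^2 ≤ ‖q‖^2 := pow_le_pow_left₀ (abs_nonneg _) h 2
  rwa [sq_abs] at h2

lemma gauss_int : Integrable (fun q : P3 => Real.exp (-‖q‖^2)) := by
  have h := (GaussianFourier.integrable_cexp_neg_mul_sq_norm_add (V := P3) (b := 1)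
    (by norm_num) 0 0).norm
  have e : ∀ q : P3, ‖Complex.exp (-(1:ℂ) * ‖q‖^2 + 0 * (inner ℝ (0:P3) q : ℝ))‖
      = Real.exp (-‖q‖^2) := by
    intro q
    rw [Complex.norm_exp]
    rw [show (-(1:ℂ) * ‖q‖^2 + 0 * ((inner ℝ (0:P3) q : ℝ) : ℂ)) = ((-‖q‖^2 : ℝ) : ℂ) by
      push_cast; ring]
    rw [Complex.ofReal_re]
  simpa only [e] using h

lemma cont_coord : Continuous fun q : P3 => q 0 :=
  (EuclideanSpace.proj (0 : Fin 3) : P3 →L[ℝ] ℝ).continuous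

lemma meas_normsq : Measurable fun q : P3 => ‖q‖^2 := (continuous_norm.pow 2).measurable

lemma meas_domA (g n0 Λ : ℝ) (p : P3) : MeasurableSet (domA g n0 Λ p) := by
  unfold domA
  exact (measurableSet_lt measurable_const meas_normsq).inter
    ((measurableSet_lt measurable_const (measurable_const.sub meas_normsq)).inter
      (measurableSet_le measurable_const
        ((measurable_const.sub meas_normsq).sub
          ((measurable_const.sub cont_coord.measurable).pow_const 2))))

lemma meas_domB (g n0 Λ : ℝ) (p : P3) : MeasurableSet (domB g n0 Λ p) := by
  unfold domB
  exact (measurableSet_lt measurable_const meas_normsq).inter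
    (measurableSet_le measurable_const
      (((measurable_const.add meas_normsq).add measurable_const).sub
        ((measurable_const.add cont_coord.measurable).pow_const 2)))

lemma meas_Pl : Measurable Pl := by
  unfold Pl
  exact measurable_const.div ((Real.measurable_exp.comp meas_normsq).sub measurable_const)

lemma Pl_nonneg (q : P3) : 0 ≤ Pl q := by
  unfold Pl
  have h : (1:ℝ) ≤ Real.exp (‖q‖^2) := Real.one_le_exp (by positivity)
  exact one_div_nonneg.2 (by linarith)

/-- monotonicity of a ↦ 1/(eᵃ−1). -/
lemma inv_em1_mono {a a' : ℝ} (h0 : 0 < a) (h : a ≤ a') :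
    1 / (Real.exp a' - 1) ≤ 1 / (Real.exp a - 1) := by
  have h1 : (1:ℝ) < Real.exp a := by
    have := Real.exp_lt_exp.2 h0; rwa [Real.exp_zero] at this
  exact one_div_le_one_div_of_le (by linarith) (by simpa using Real.exp_le_exp.2 h)

lemma inv_em1_pos {a : ℝ} (h0 : 0 < a) : 0 < 1 / (Real.exp a - 1) := by
  have h1 : (1:ℝ) < Real.exp a := by
    have := Real.exp_lt_exp.2 h0; rwa [Real.exp_zero] at this
  exact one_div_pos.2 (by linarith)

/-- Gaussian domination of 1/(eᵃ−1) for a ≥ t > 0. -/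
lemma inv_em1_le_gauss {t a : ℝ} (ht : 0 < t) (h : t ≤ a) :
    1 / (Real.exp a - 1) ≤ (1 / (1 - Real.exp (-t))) * Real.exp (-a) := by
  have h1 : (1:ℝ) < Real.exp a := by
    have := Real.exp_lt_exp.2 (lt_of_lt_of_le ht h); rwa [Real.exp_zero] at this
  have h4 : 0 < 1 - Real.exp (-t) := by
    have : Real.exp (-t) < 1 := Real.exp_lt_one_iff.2 (by linarith)
    linarith
  have h2 : (1:ℝ) ≤ Real.exp (a - t) := Real.one_le_exp (by linarith)
  have h3 : Real.exp a * (1 - Real.exp (-t)) = Real.exp a - Real.exp (a - t) := by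
    rw [mul_sub, mul_one, ← Real.exp_add]; ring_nf
  have h5 : Real.exp a * (1 - Real.exp (-t)) ≤ Real.exp a - 1 := by rw [h3]; linarith
  have h6 : 0 < Real.exp a * (1 - Real.exp (-t)) := by positivity
  calc 1 / (Real.exp a - 1) ≤ 1 / (Real.exp a * (1 - Real.exp (-t))) :=
        one_div_le_one_div_of_le h6 h5
    _ = (1 / (1 - Real.exp (-t))) * Real.exp (-a) := by
        have he : Real.exp (-a) = (Real.exp a)⁻¹ := Real.exp_neg a
        rw [he, one_div, one_div, mul_inv]; ring

set_option maxHeartbeats 1000000 in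
/-- two-sided cubic growth bound for the collision frequency. -/
theorem collision_frequency_bounds
    (g n0 Λ : ℝ) (hg : 0 < g) (hn0 : 0 < n0)
    (hΛ : 2 * Real.sqrt (g * n0) < Λ) :
    ∃ ν0 ν1 : ℝ, 0 < ν0 ∧ 0 < ν1 ∧ ∀ p : P3, 2 * Λ ^ 2 < ‖p‖ ^ 2 →
      ν0 * (1 + ‖p‖) ^ 3 ≤ nuFreq g n0 Λ p ∧ nuFreq g n0 Λ p ≤ ν1 * (1 + ‖p‖) ^ 3 := by
  have hgn : 0 < g * n0 := mul_pos hg hn0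
  have hΛ0 : 0 < Λ := lt_of_le_of_lt (by positivity) hΛ
  have hΛsq : 0 < Λ ^ 2 := pow_pos hΛ0 2
  have hπ := Real.pi_pos
  -- constants
  obtain ⟨M, hM_def⟩ : ∃ x : ℝ, x = 16 * (Λ + Real.sqrt (g * n0) + 1) := ⟨_, rfl⟩
  have hM16 : 16 ≤ M := by
    rw [hM_def]; nlinarith [Real.sqrt_nonneg (g * n0), hΛ0]
  have hM0 : 0 < M := by linarith
  obtain ⟨b, hb_def⟩ : ∃ x : ℝ, x = (volume (Metric.ball (0 : P3) 1)).toReal := ⟨_, rfl⟩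
  have hball_lt : volume (Metric.ball (0 : P3) 1) < ⊤ := measure_ball_lt_top
  have hb0 : 0 < b := by
    rw [hb_def]
    exact ENNReal.toReal_pos (Metric.measure_ball_pos volume 0 one_pos).ne' hball_lt.ne
  obtain ⟨C0, hC0_def⟩ : ∃ x : ℝ, x = 1 / (Real.exp (2 * Λ ^ 2) - 1) := ⟨_, rfl⟩
  have hC0 : 0 < C0 := by rw [hC0_def]; exact inv_em1_pos (by linarith)
  obtain ⟨C', hC'_def⟩ : ∃ x : ℝ, x = 1 / (1 - Real.exp (-(2 * Λ ^ 2))) := ⟨_, rfl⟩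
  have hC' : 0 < C' := by
    have h : Real.exp (-(2 * Λ ^ 2)) < 1 := Real.exp_lt_one_iff.2 (by linarith)
    rw [hC'_def]; exact one_div_pos.2 (by linarith)
  obtain ⟨C2, hC2_def⟩ : ∃ x : ℝ, x = ∫ q : P3, Real.exp (-‖q‖ ^ 2) := ⟨_, rfl⟩
  have hC2 : 0 ≤ C2 := by
    rw [hC2_def]; exact integral_nonneg (fun q => (Real.exp_pos _).le)
  obtain ⟨δ, hδ_def⟩ : ∃ x : ℝ, x = 1 / (Real.exp (3 * Λ ^ 2) - 1) - 1 / (Real.exp (4 * Λ ^ 2) - 1) := ⟨_, rfl⟩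
  have hδ : 0 < δ := by
    have h1 : (1:ℝ) < Real.exp (3 * Λ ^ 2) := by
      have := Real.exp_lt_exp.2 (show (0:ℝ) < 3 * Λ ^ 2 by linarith)
      rwa [Real.exp_zero] at this
    have h2 : Real.exp (3 * Λ ^ 2) < Real.exp (4 * Λ ^ 2) :=
      Real.exp_lt_exp.2 (by linarith)
    have h3 := one_div_lt_one_div_of_lt (by linarith : (0:ℝ) < Real.exp (3 * Λ ^ 2) - 1)
      (by linarith : Real.exp (3 * Λ ^ 2) - 1 < Real.exp (4 * Λ ^ 2) - 1)
    rw [hδ_def]; linarith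
  obtain ⟨ε, hε_def⟩ : ∃ x : ℝ, x = g * n0 / (2 * M) := ⟨_, rfl⟩
  have hε : 0 < ε := by rw [hε_def]; exact div_pos hgn (by linarith)
  -- the slab S used in the small-momentum regime
  obtain ⟨S, hS_def⟩ : ∃ S : Set P3,
      S = {q : P3 | 2 * Λ ^ 2 < ‖q‖ ^ 2 ∧ ‖q‖ ^ 2 < 3 * Λ ^ 2 ∧ |q 0| < ε} := ⟨_, rfl⟩
  have hSopen : IsOpen S := by
    rw [hS_def]
    have c2 : Continuous fun q : P3 => ‖q‖ ^ 2 := continuous_norm.pow 2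
    exact (isOpen_lt continuous_const c2).inter
      ((isOpen_lt c2 continuous_const).inter (isOpen_lt cont_coord.abs continuous_const))
  have hSne : S.Nonempty := by
    rw [hS_def]
    refine ⟨(WithLp.equiv 2 (Fin 3 → ℝ)).symm ![0, (8/5) * Λ, 0], ?_⟩
    set q : P3 := (WithLp.equiv 2 (Fin 3 → ℝ)).symm ![0, (8/5) * Λ, 0] with hq
    have h0 : q 0 = 0 := by simp [hq]
    have h1 : q 1 = (8/5) * Λ := by simp [hq]
    have h2 : q 2 = 0 := by simp [hq]
    have hn : ‖q‖ ^ 2 = ((8/5) * Λ) ^ 2 := by rw [norm_sq_eq3, h0, h1, h2]; ring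
    exact ⟨by rw [hn]; nlinarith [hΛ0], by rw [hn]; nlinarith [hΛ0],
      by rw [h0]; simpa using hε⟩
  have hSsubB : S ⊆ Metric.ball (0 : P3) (2 * Λ) := by
    intro q hq
    rw [hS_def] at hq
    obtain ⟨hq1, hq2, hq3⟩ := hq
    rw [Metric.mem_ball, dist_zero_right]
    have h1 : ‖q‖ ^ 2 < (2 * Λ) ^ 2 := by nlinarith [hΛ0]
    exact lt_of_pow_lt_pow_left₀ 2 (by linarith) h1
  have hSfin : volume S < ⊤ := lt_of_le_of_lt (measure_mono hSsubB) measure_ball_lt_top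
  have hSmeas : MeasurableSet S := hSopen.measurableSet
  obtain ⟨vS, hvS_def⟩ : ∃ x : ℝ, x = (volume S).toReal := ⟨_, rfl⟩
  have hvS : 0 < vS := by
    rw [hvS_def]
    exact ENNReal.toReal_pos (hSopen.measure_pos volume hSne).ne' hSfin.ne
  -- the two candidate constants
  obtain ⟨ν0, hν0_def⟩ : ∃ x : ℝ,
      x = min (2 * Real.pi * δ * vS / (1 + M) ^ 3) (Real.pi * b / 32768) := ⟨_, rfl⟩
  obtain ⟨ν1, hν1_def⟩ : ∃ x : ℝ,
      x = Real.pi * (1 + 2 * C0) * b + 2 * Real.pi * C' * C2 := ⟨_, rfl⟩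
  have hν0 : 0 < ν0 := by
    rw [hν0_def]
    refine lt_min ?_ ?_
    · exact div_pos (mul_pos (mul_pos (mul_pos (by norm_num) hπ) hδ) hvS)
        (pow_pos (by linarith) 3)
    · exact div_pos (mul_pos hπ hb0) (by norm_num)
  have hν1 : 0 < ν1 := by
    have h1 : 0 < Real.pi * (1 + 2 * C0) * b := mul_pos (mul_pos hπ (by linarith)) hb0
    have h2 : 0 ≤ 2 * Real.pi * C' * C2 :=
      mul_nonneg (mul_nonneg (by positivity) hC'.le) hC2
    rw [hν1_def]; linarith
  refine ⟨ν0, ν1, hν0, hν1, fun p hp => ?_⟩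
  -- basic facts about p
  have hR0 : 0 < ‖p‖ := by
    rcases eq_or_lt_of_le (norm_nonneg p) with h | h
    · exfalso; rw [← h] at hp; nlinarith [hΛsq]
    · exact h
  -- integrands
  obtain ⟨fA, hfA_def⟩ : ∃ fA : P3 → ℝ,
      fA = fun q => 1 + Pl q + 1 / (Real.exp (‖p‖ ^ 2 - g * n0 - ‖q‖ ^ 2) - 1) := ⟨_, rfl⟩
  obtain ⟨fB, hfB_def⟩ : ∃ fB : P3 → ℝ,
      fB = fun q => Pl q - 1 / (Real.exp (‖p‖ ^ 2 + ‖q‖ ^ 2 + g * n0) - 1) := ⟨_, rfl⟩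
  have hfA_meas : Measurable fA := by
    rw [hfA_def]
    exact (measurable_const.add meas_Pl).add
      (measurable_const.div ((Real.measurable_exp.comp
        (measurable_const.sub meas_normsq)).sub measurable_const))
  have hfB_meas : Measurable fB := by
    rw [hfB_def]
    exact meas_Pl.sub (measurable_const.div ((Real.measurable_exp.comp
      ((measurable_const.add meas_normsq).add measurable_const)).sub measurable_const))
  have mA := meas_domA g n0 Λ p
  have mB := meas_domB g n0 Λ p
  -- domA is contained in the ball of radius ‖p‖
  have hsubA : domA g n0 Λ p ⊆ Metric.ball (0 : P3) ‖p‖ := by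
    intro q hq
    obtain ⟨hq1, hq2, hq3⟩ := hq
    rw [Metric.mem_ball, dist_zero_right]
    have h1 : ‖q‖ ^ 2 < ‖p‖ ^ 2 := by nlinarith [hΛsq, hgn]
    exact lt_of_pow_lt_pow_left₀ 2 (norm_nonneg p) h1
  have μA_fin : volume (domA g n0 Λ p) < ⊤ :=
    lt_of_le_of_lt (measure_mono hsubA) measure_ball_lt_top
  -- pointwise bounds on domA
  have hfA_lb : ∀ q ∈ domA g n0 Λ p, (1:ℝ) ≤ fA q := by
    intro q hq
    obtain ⟨hq1, hq2, hq3⟩ := hq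
    have h1 := Pl_nonneg q
    have h2 : 0 < 1 / (Real.exp (‖p‖ ^ 2 - g * n0 - ‖q‖ ^ 2) - 1) :=
      inv_em1_pos (by linarith)
    rw [hfA_def]; dsimp only; linarith
  have hfA_ub : ∀ q ∈ domA g n0 Λ p, fA q ≤ 1 + 2 * C0 := by
    intro q hq
    obtain ⟨hq1, hq2, hq3⟩ := hq
    have h1 : Pl q ≤ C0 := by
      rw [hC0_def]; unfold Pl
      exact inv_em1_mono (by linarith) hq1.le
    have h2 : 1 / (Real.exp (‖p‖ ^ 2 - g * n0 - ‖q‖ ^ 2) - 1) ≤ C0 := by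
      rw [hC0_def]
      exact inv_em1_mono (by linarith) hq2.le
    rw [hfA_def]; dsimp only; linarith
  have hfA_bd : ∀ q ∈ domA g n0 Λ p, ‖fA q‖ ≤ 1 + 2 * C0 := by
    intro q hq
    rw [Real.norm_eq_abs, abs_of_nonneg (by linarith [hfA_lb q hq])]
    exact hfA_ub q hq
  have hIA_int : IntegrableOn fA (domA g n0 Λ p) := by
    refine Integrable.mono' (g := fun _ => 1 + 2 * C0)
      (integrableOn_const μA_fin.ne) hfA_meas.aestronglyMeasurable ?_
    exact (ae_restrict_iff' mA).2 (ae_of_all _ hfA_bd)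
  -- pointwise bounds on domB
  have hPl_gauss : ∀ q : P3, 2 * Λ ^ 2 < ‖q‖ ^ 2 → Pl q ≤ C' * Real.exp (-‖q‖ ^ 2) := by
    intro q hq
    rw [hC'_def]; unfold Pl
    exact inv_em1_le_gauss (by linarith) hq.le
  have hIB_Pl : IntegrableOn Pl (domB g n0 Λ p) := by
    refine Integrable.mono' (g := fun q => C' * Real.exp (-‖q‖ ^ 2))
      ((gauss_int.const_mul C').integrableOn) meas_Pl.aestronglyMeasurable ?_
    refine (ae_restrict_iff' mB).2 (ae_of_all _ fun q hq => ?_)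
    rw [Real.norm_eq_abs, abs_of_nonneg (Pl_nonneg q)]
    exact hPl_gauss q hq.1
  have hIB_h : IntegrableOn
      (fun q : P3 => 1 / (Real.exp (‖p‖ ^ 2 + ‖q‖ ^ 2 + g * n0) - 1))
      (domB g n0 Λ p) := by
    refine Integrable.mono' (g := fun q => C' * Real.exp (-‖q‖ ^ 2))
      ((gauss_int.const_mul C').integrableOn)
      ((measurable_const.div ((Real.measurable_exp.comp
        ((measurable_const.add meas_normsq).add measurable_const)).sub
          measurable_const)).aestronglyMeasurable) ?_
    refine (ae_restrict_iff' mB).2 (ae_of_all _ fun q hq => ?_)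
    have hx : 2 * Λ ^ 2 ≤ ‖p‖ ^ 2 + ‖q‖ ^ 2 + g * n0 := by
      linarith [hq.1, hgn, sq_nonneg ‖p‖]
    have h1 : 0 < 1 / (Real.exp (‖p‖ ^ 2 + ‖q‖ ^ 2 + g * n0) - 1) :=
      inv_em1_pos (by linarith)
    rw [Real.norm_eq_abs, abs_of_nonneg h1.le]
    calc 1 / (Real.exp (‖p‖ ^ 2 + ‖q‖ ^ 2 + g * n0) - 1)
        ≤ C' * Real.exp (-(‖p‖ ^ 2 + ‖q‖ ^ 2 + g * n0)) := by
          rw [hC'_def]; exact inv_em1_le_gauss (by linarith) hx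
      _ ≤ C' * Real.exp (-‖q‖ ^ 2) := by
          refine mul_le_mul_of_nonneg_left ?_ hC'.le
          exact Real.exp_le_exp.2 (by linarith [hgn, sq_nonneg ‖p‖])
  have hIB_int : IntegrableOn fB (domB g n0 Λ p) := by
    rw [hfB_def]; exact hIB_Pl.sub hIB_h
  have hfB_nn : ∀ q ∈ domB g n0 Λ p, 0 ≤ fB q := by
    intro q hq
    have h1 : 0 < ‖q‖ ^ 2 := by linarith [hq.1, hΛsq]
    have h2 : ‖q‖ ^ 2 ≤ ‖p‖ ^ 2 + ‖q‖ ^ 2 + g * n0 := by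
      linarith [sq_nonneg ‖p‖, hgn]
    have h3 := inv_em1_mono h1 h2
    rw [hfB_def]; dsimp only; unfold Pl; linarith
  -- abbreviate the two integrals
  rw [show nuFreq g n0 Λ p = Real.pi * (∫ q in domA g n0 Λ p, fA q)
      + 2 * Real.pi * (∫ q in domB g n0 Λ p, fB q) by
    rw [nuFreq, hfA_def, hfB_def]]
  obtain ⟨IA, hIA_def⟩ : ∃ x : ℝ, x = ∫ q in domA g n0 Λ p, fA q := ⟨_, rfl⟩
  obtain ⟨IB, hIB_def⟩ : ∃ x : ℝ, x = ∫ q in domB g n0 Λ p, fB q := ⟨_, rfl⟩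
  rw [← hIA_def, ← hIB_def]
  have hIA_nn : 0 ≤ IA := by
    rw [hIA_def]; exact setIntegral_nonneg mA (fun q hq => by linarith [hfA_lb q hq])
  have hIB_nn : 0 ≤ IB := by
    rw [hIB_def]; exact setIntegral_nonneg mB hfB_nn
  -- upper bounds on the integrals
  have hIA_up : IA ≤ (1 + 2 * C0) * (‖p‖ ^ 3 * b) := by
    have h1 : ‖IA‖ ≤ (1 + 2 * C0) * (volume (domA g n0 Λ p)).toReal := by
      rw [hIA_def]
      exact norm_setIntegral_le_of_norm_le_const μA_fin hfA_bd
    have h2 : (volume (domA g n0 Λ p)).toReal ≤ ‖p‖ ^ 3 * b := by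
      have h3 : volume (domA g n0 Λ p) ≤ ENNReal.ofReal (‖p‖ ^ 3)
          * volume (Metric.ball (0 : P3) 1) := by
        refine le_trans (measure_mono hsubA) ?_
        rw [Measure.addHaar_ball volume (0 : P3) (norm_nonneg p),
          finrank_euclideanSpace_fin]
      have h4 := ENNReal.toReal_mono
        (ENNReal.mul_ne_top ENNReal.ofReal_ne_top hball_lt.ne) h3
      rwa [ENNReal.toReal_mul, ENNReal.toReal_ofReal (by positivity), ← hb_def] at h4
    calc IA ≤ ‖IA‖ := Real.le_norm_self _
      _ ≤ (1 + 2 * C0) * (volume (domA g n0 Λ p)).toReal := h1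
      _ ≤ (1 + 2 * C0) * (‖p‖ ^ 3 * b) :=
          mul_le_mul_of_nonneg_left h2 (by linarith)
  have hIB_up : IB ≤ C' * C2 := by
    have h1 : IB ≤ ∫ q in domB g n0 Λ p, C' * Real.exp (-‖q‖ ^ 2) := by
      rw [hIB_def]
      refine setIntegral_mono_on hIB_int (gauss_int.const_mul C').integrableOn mB ?_
      intro q hq
      have h2 : 0 < 1 / (Real.exp (‖p‖ ^ 2 + ‖q‖ ^ 2 + g * n0) - 1) :=
        inv_em1_pos (by linarith [hq.1, hgn, sq_nonneg ‖p‖, hΛsq])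
      have h3 := hPl_gauss q hq.1
      rw [hfB_def]; dsimp only; linarith
    have h2 : (∫ q in domB g n0 Λ p, C' * Real.exp (-‖q‖ ^ 2))
        ≤ ∫ q : P3, C' * Real.exp (-‖q‖ ^ 2) :=
      setIntegral_le_integral (gauss_int.const_mul C')
        (ae_of_all _ fun q => mul_nonneg hC'.le (Real.exp_pos _).le)
    have h3 : (∫ q : P3, C' * Real.exp (-‖q‖ ^ 2)) = C' * C2 := by
      rw [hC2_def]; exact integral_const_mul C' _
    linarith
  constructor
  · -- lower bound
    rcases le_or_gt ‖p‖ M with hpM | hpM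
    · -- small momenta: use the slab S inside domB
      have hSsub : S ⊆ domB g n0 Λ p := by
        intro q hq
        rw [hS_def] at hq
        obtain ⟨hq1, hq2, hq3⟩ := hq
        refine ⟨hq1, ?_⟩
        have hp0 : |p 0| ≤ ‖p‖ := abs_coord_le p 0
        have hq0 : q 0 ^ 2 ≤ ‖q‖ ^ 2 := coord_sq_le q 0
        have hprod : p 0 * q 0 ≤ M * ε := by
          calc p 0 * q 0 ≤ |p 0 * q 0| := le_abs_self _
            _ = |p 0| * |q 0| := abs_mul _ _
            _ ≤ M * ε :=
                mul_le_mul (le_trans hp0 hpM) hq3.le (abs_nonneg _) hM0.le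
        have hMε : 2 * (M * ε) = g * n0 := by
          rw [hε_def]; field_simp [hM0.ne']
        have hp0sq : p 0 ^ 2 ≤ ‖p‖ ^ 2 := coord_sq_le p 0
        have e : (p 0 + q 0) ^ 2 = p 0 ^ 2 + 2 * (p 0 * q 0) + q 0 ^ 2 := by ring
        linarith [hprod, hp0sq, hq0, hMε, e]
      have h1 : (∫ q in S, fB q) ≤ IB := by
        rw [hIB_def]
        refine setIntegral_mono_set hIB_int ?_ (HasSubset.Subset.eventuallyLE hSsub)
        exact (ae_restrict_iff' mB).2 (ae_of_all _ hfB_nn)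
      have h2 : δ * vS ≤ ∫ q in S, fB q := by
        have h3 : (∫ _ in S, δ) ≤ ∫ q in S, fB q := by
          refine setIntegral_mono_on (integrableOn_const hSfin.ne)
            (hIB_int.mono_set hSsub) hSmeas ?_
          intro q hq
          rw [hS_def] at hq
          obtain ⟨hq1, hq2, hq3⟩ := hq
          have hPlq : 1 / (Real.exp (3 * Λ ^ 2) - 1) ≤ Pl q := by
            unfold Pl; exact inv_em1_mono (by linarith) hq2.le
          have hhq : 1 / (Real.exp (‖p‖ ^ 2 + ‖q‖ ^ 2 + g * n0) - 1)
              ≤ 1 / (Real.exp (4 * Λ ^ 2) - 1) :=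
            inv_em1_mono (by linarith) (by linarith)
          rw [hδ_def, hfB_def]; dsimp only; linarith
        rwa [setIntegral_const, measureReal_def, smul_eq_mul, ← hvS_def, mul_comm] at h3
      have hnu_lb : 2 * Real.pi * (δ * vS) ≤ Real.pi * IA + 2 * Real.pi * IB := by
        have h4 : 2 * Real.pi * (δ * vS) ≤ 2 * Real.pi * IB :=
          mul_le_mul_of_nonneg_left (by linarith) (by positivity)
        have h5 : 0 ≤ Real.pi * IA := mul_nonneg hπ.le hIA_nn
        linarith
      have hν0s : ν0 * (1 + ‖p‖) ^ 3 ≤ 2 * Real.pi * (δ * vS) := by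
        have e1 : ν0 ≤ 2 * Real.pi * δ * vS / (1 + M) ^ 3 := by
          rw [hν0_def]; exact min_le_left _ _
        have e2 : (1 + ‖p‖) ^ 3 ≤ (1 + M) ^ 3 :=
          pow_le_pow_left₀ (by positivity) (by linarith) 3
        have e4 : (0:ℝ) ≤ 2 * Real.pi * δ * vS / (1 + M) ^ 3 :=
          div_nonneg (mul_nonneg (mul_nonneg (mul_nonneg (by norm_num) hπ.le) hδ.le)
            hvS.le) (pow_nonneg (by linarith) 3)
        calc ν0 * (1 + ‖p‖) ^ 3
            ≤ (2 * Real.pi * δ * vS / (1 + M) ^ 3) * (1 + M) ^ 3 :=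
              mul_le_mul e1 e2 (by positivity) e4
          _ = 2 * Real.pi * (δ * vS) := by
              rw [div_mul_cancel₀ _ (ne_of_gt (pow_pos (show (0:ℝ) < 1 + M by linarith) 3))]
              ring
      linarith
    · -- large momenta: a ball of radius ‖p‖/16 inside domA
      obtain ⟨r, hr_def⟩ : ∃ x : ℝ, x = ‖p‖ / 16 := ⟨_, rfl⟩
      have hr_lb : Λ + Real.sqrt (g * n0) + 1 ≤ r := by
        rw [hr_def]; rw [hM_def] at hpM; linarith
      have hsq0 := Real.sqrt_nonneg (g * n0)
      have hΛr : Λ ≤ r := by linarith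
      have h1r : 1 ≤ r := by linarith
      have hr0 : 0 < r := by linarith
      have hsqr : Real.sqrt (g * n0) ≤ r := by linarith
      have hgnr : g * n0 ≤ r ^ 2 := by
        have e1 : Real.sqrt (g * n0) ^ 2 = g * n0 := Real.sq_sqrt hgn.le
        have e2 : Real.sqrt (g * n0) ^ 2 ≤ r ^ 2 := pow_le_pow_left₀ hsq0 hsqr 2
        linarith
      have hx : |p 0| ≤ ‖p‖ := abs_coord_le p 0
      obtain ⟨s, hs_def⟩ : ∃ x : ℝ,
        x = if 0 ≤ p 0 then -(r + 2 * Λ) else (r + 2 * Λ) := ⟨_, rfl⟩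
      obtain ⟨c, hc_def⟩ : ∃ c : P3,
        c = (WithLp.equiv 2 (Fin 3 → ℝ)).symm ![p 0 / 2 + s, r + 2 * Λ, 0] := ⟨_, rfl⟩
      have hc0 : c 0 = p 0 / 2 + s := by simp [hc_def]
      have hc1 : c 1 = r + 2 * Λ := by simp [hc_def]
      have hc2 : c 2 = 0 := by simp [hc_def]
      have hball : Metric.ball c r ⊆ domA g n0 Λ p := by
        intro q hq
        have hdist : ‖q - c‖ < r := by rwa [Metric.mem_ball, dist_eq_norm] at hq
        have hco : ∀ i : Fin 3, |q i - c i| ≤ r := by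
          intro i
          have h := abs_coord_le (q - c) i
          have he : (q - c) i = q i - c i := by simp
          rw [he] at h; linarith
        have h0a : |q 0 - (p 0 / 2 + s)| ≤ r := by have := hco 0; rwa [hc0] at this
        have h0ab := abs_le.1 h0a
        have h1ab := abs_le.1 (show |q 1 - (r + 2 * Λ)| ≤ r by
          have := hco 1; rwa [hc1] at this)
        have h1l : 2 * Λ ≤ q 1 := by linarith [h1ab.1]
        have h1u : q 1 ≤ 2 * r + 2 * Λ := by linarith [h1ab.2]
        have h2a : |q 2| ≤ r := by have := hco 2; rwa [hc2, sub_zero] at this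
        have h2ab := abs_le.1 h2a
        have hkey : 4 * Λ ^ 2 ≤ (p 0 - q 0) ^ 2 ∧
            (q 0 - p 0 / 2) ^ 2 ≤ (2 * r + 2 * Λ) ^ 2 := by
          by_cases hxs : 0 ≤ p 0
          · have hs' : s = -(r + 2 * Λ) := by rw [hs_def, if_pos hxs]
            rw [hs'] at h0ab
            obtain ⟨hl, hu⟩ := h0ab
            constructor
            · have hge : 2 * Λ ≤ p 0 - q 0 := by linarith
              have hm := mul_nonneg (show (0:ℝ) ≤ p 0 - q 0 - 2 * Λ by linarith)
                (show (0:ℝ) ≤ p 0 - q 0 + 2 * Λ by linarith)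
              have e : (p 0 - q 0 - 2 * Λ) * (p 0 - q 0 + 2 * Λ)
                  = (p 0 - q 0) ^ 2 - 4 * Λ ^ 2 := by ring
              linarith
            · exact sq_le_sq' (by linarith) (by linarith)
          · have hs' : s = r + 2 * Λ := by rw [hs_def, if_neg hxs]
            push_neg at hxs
            rw [hs'] at h0ab
            obtain ⟨hl, hu⟩ := h0ab
            constructor
            · have hge : 2 * Λ ≤ q 0 - p 0 := by linarith
              have hm := mul_nonneg (show (0:ℝ) ≤ q 0 - p 0 - 2 * Λ by linarith)
                (show (0:ℝ) ≤ q 0 - p 0 + 2 * Λ by linarith)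
              have e : (q 0 - p 0 - 2 * Λ) * (q 0 - p 0 + 2 * Λ)
                  = (p 0 - q 0) ^ 2 - 4 * Λ ^ 2 := by ring
              linarith
            · exact sq_le_sq' (by linarith) (by linarith)
        have hnsq := norm_sq_eq3 q
        have hx2 : p 0 ^ 2 ≤ ‖p‖ ^ 2 := coord_sq_le p 0
        have hq1sq : q 1 ^ 2 ≤ (2 * r + 2 * Λ) ^ 2 := sq_le_sq' (by linarith) h1u
        have hq2sq : q 2 ^ 2 ≤ r ^ 2 := sq_le_sq' (by linarith [h2ab.1]) h2ab.2
        have h2rΛ : (2 * r + 2 * Λ) ^ 2 ≤ 16 * r ^ 2 := by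
          have hm := mul_nonneg (show (0:ℝ) ≤ r - Λ by linarith)
            (show (0:ℝ) ≤ 3 * r + Λ by linarith)
          have e : 4 * ((r - Λ) * (3 * r + Λ)) = 16 * r ^ 2 - (2 * r + 2 * Λ) ^ 2
              + 8 * (r * Λ) - 8 * (r * Λ) := by ring
          linarith
        have hr2 : r ^ 2 = ‖p‖ ^ 2 / 256 := by rw [hr_def]; ring
        have hid : q 0 ^ 2 + (p 0 - q 0) ^ 2
            = 2 * (q 0 - p 0 / 2) ^ 2 + p 0 ^ 2 / 2 := by ring
        have hF : ‖q‖ ^ 2 + (p 0 - q 0) ^ 2 ≤ ‖p‖ ^ 2 - g * n0 := by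
          rw [hnsq]; linarith [hkey.2, hq1sq, hq2sq, hx2, hgnr, h2rΛ, hid, hr2]
        refine ⟨?_, ?_, ?_⟩
        · rw [hnsq]
          have e1 : (2 * Λ) ^ 2 ≤ q 1 ^ 2 := pow_le_pow_left₀ (by linarith) h1l 2
          have e2 : (2 * Λ) ^ 2 = 4 * Λ ^ 2 := by ring
          linarith [sq_nonneg (q 0), sq_nonneg (q 2), hΛsq]
        · linarith [hF, hkey.1, hΛsq]
        · linarith [hF]
      have hvb : volume (Metric.ball c r)
          = ENNReal.ofReal (r ^ 3) * volume (Metric.ball (0 : P3) 1) := by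
        rw [Measure.addHaar_ball volume c hr0.le, finrank_euclideanSpace_fin]
      have hvol2 : r ^ 3 * b ≤ (volume (domA g n0 Λ p)).toReal := by
        have h4 := ENNReal.toReal_mono μA_fin.ne (hvb ▸ measure_mono hball)
        rwa [ENNReal.toReal_mul, ENNReal.toReal_ofReal (pow_nonneg hr0.le 3), ← hb_def] at h4
      have hIA_lb : (volume (domA g n0 Λ p)).toReal ≤ IA := by
        have h5 : (∫ _ in domA g n0 Λ p, (1:ℝ)) ≤ IA := by
          rw [hIA_def]
          exact setIntegral_mono_on (integrableOn_const μA_fin.ne) hIA_int mA hfA_lb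
        rwa [setIntegral_const, measureReal_def, smul_eq_mul, mul_one] at h5
      have hν0l : ν0 * (1 + ‖p‖) ^ 3 ≤ Real.pi * (r ^ 3 * b) := by
        have e1 : ν0 ≤ Real.pi * b / 32768 := by rw [hν0_def]; exact min_le_right _ _
        have e2 : (1 + ‖p‖) ^ 3 ≤ (2 * ‖p‖) ^ 3 :=
          pow_le_pow_left₀ (by positivity) (by linarith) 3
        have e4 : (0:ℝ) ≤ Real.pi * b / 32768 :=
          div_nonneg (mul_nonneg hπ.le hb0.le) (by norm_num)
        calc ν0 * (1 + ‖p‖) ^ 3 ≤ (Real.pi * b / 32768) * (2 * ‖p‖) ^ 3 :=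
              mul_le_mul e1 e2 (by positivity) e4
          _ = Real.pi * (r ^ 3 * b) := by rw [hr_def]; ring
      have h6 : Real.pi * (r ^ 3 * b) ≤ Real.pi * IA :=
        mul_le_mul_of_nonneg_left (le_trans hvol2 hIA_lb) hπ.le
      have h7 : 0 ≤ 2 * Real.pi * IB := mul_nonneg (by positivity) hIB_nn
      linarith
  · -- upper bound
    have hR3 : ‖p‖ ^ 3 ≤ (1 + ‖p‖) ^ 3 := pow_le_pow_left₀ (norm_nonneg p) (by linarith) 3
    have h1R : (1:ℝ) ≤ (1 + ‖p‖) ^ 3 := by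
      calc (1:ℝ) = 1 ^ 3 := by norm_num
        _ ≤ (1 + ‖p‖) ^ 3 := pow_le_pow_left₀ (by norm_num) (by linarith [norm_nonneg p]) 3
    have A1 : Real.pi * IA ≤ Real.pi * ((1 + 2 * C0) * (‖p‖ ^ 3 * b)) :=
      mul_le_mul_of_nonneg_left hIA_up hπ.le
    have A2 : Real.pi * ((1 + 2 * C0) * (‖p‖ ^ 3 * b))
        = (Real.pi * (1 + 2 * C0) * b) * ‖p‖ ^ 3 := by ring
    have hposA : (0:ℝ) ≤ Real.pi * (1 + 2 * C0) * b :=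
      mul_nonneg (mul_nonneg hπ.le (by linarith)) hb0.le
    have A3 : (Real.pi * (1 + 2 * C0) * b) * ‖p‖ ^ 3
        ≤ (Real.pi * (1 + 2 * C0) * b) * (1 + ‖p‖) ^ 3 :=
      mul_le_mul_of_nonneg_left hR3 hposA
    have B1 : 2 * Real.pi * IB ≤ 2 * Real.pi * (C' * C2) :=
      mul_le_mul_of_nonneg_left hIB_up (by positivity)
    have hposB : (0:ℝ) ≤ 2 * Real.pi * C' * C2 :=
      mul_nonneg (mul_nonneg (by positivity) hC'.le) hC2
    have B2 : 2 * Real.pi * (C' * C2) ≤ (2 * Real.pi * C' * C2) * (1 + ‖p‖) ^ 3 := by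
      calc 2 * Real.pi * (C' * C2) = (2 * Real.pi * C' * C2) * 1 := by ring
        _ ≤ (2 * Real.pi * C' * C2) * (1 + ‖p‖) ^ 3 :=
            mul_le_mul_of_nonneg_left h1R hposB
    have hfin : ν1 * (1 + ‖p‖) ^ 3 = (Real.pi * (1 + 2 * C0) * b) * (1 + ‖p‖) ^ 3
        + (2 * Real.pi * C' * C2) * (1 + ‖p‖) ^ 3 := by rw [hν1_def]; ring
    linarith
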